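/- Let n ≥ 2 be an integer and let i ≠ j be elements of Fin n. The monoid of all functions from Fin n to Fin n (under composition) is generated by the three elements: the transposition (0,1) (exchanging 0 and 1 and fixing all other points), the n-cycle (0,1,…,n−1) (sending k to k+1 mod n), and the contraction (i→j) (the map sending i to j and fixing all other points). That is, the submonoid generated by these three maps is the whole monoid Fin n → Fin n. -/

import Mathlib

open Equiv Equiv.Perm Function

def permHom (α : Type*) : Equiv.Perm α →* Function.End α where
  toFun σ := ⇑σ
  map_one' := rfl
  map_mul' _ _ := rfl

lemma perm_mem {m : ℕ} (M : Submonoid (Function.End (Fin (m + 2))))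
    (h2 : (⇑(finRotate (m + 2)) : Function.End (Fin (m + 2))) ∈ M)
    (h1 : (⇑(Equiv.swap (0 : Fin (m + 2)) (finRotate (m + 2) 0)) : Function.End (Fin (m + 2))) ∈ M)
    (σ : Equiv.Perm (Fin (m + 2))) : (⇑σ : Function.End (Fin (m + 2))) ∈ M := by
  let G : Submonoid (Equiv.Perm (Fin (m + 2))) := M.comap (permHom _)
  have hinv : ∀ τ : Equiv.Perm (Fin (m + 2)), τ ∈ G → τ⁻¹ ∈ G := by
    intro τ hτ
    have hc : 1 ≤ Fintype.card (Equiv.Perm (Fin (m + 2))) := Fintype.card_pos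
    have key : τ ^ (Fintype.card (Equiv.Perm (Fin (m + 2))) - 1) * τ = 1 := by
      rw [← pow_succ, Nat.sub_add_cancel hc]
      exact pow_card_eq_one
    have : τ⁻¹ = τ ^ (Fintype.card (Equiv.Perm (Fin (m + 2))) - 1) :=
      (eq_inv_of_mul_eq_one_left key).symm
    rw [this]
    exact pow_mem hτ _
  let G' : Subgroup (Equiv.Perm (Fin (m + 2))) :=
    { G with inv_mem' := fun {x} hx => hinv x hx }
  have htop : Subgroup.closure {finRotate (m + 2), Equiv.swap 0 (finRotate (m + 2) 0)} = ⊤ :=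
    closure_cycle_adjacent_swap isCycle_finRotate support_finRotate 0
  have hle : (⊤ : Subgroup (Equiv.Perm (Fin (m + 2)))) ≤ G' := by
    rw [← htop, Subgroup.closure_le]
    rintro τ (rfl | rfl)
    · exact h2
    · exact h1
  exact hle (Subgroup.mem_top σ)

lemma con_mem {n : ℕ} (M : Submonoid (Function.End (Fin n)))
    (hperm : ∀ σ : Equiv.Perm (Fin n), (⇑σ : Function.End (Fin n)) ∈ M)
    (i j : Fin n) (hij : i ≠ j)
    (he : ((fun x => if x = i then j else x) : Function.End (Fin n)) ∈ M)
    (a b : Fin n) (hab : a ≠ b) :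
    ((fun x => if x = a then b else x) : Function.End (Fin n)) ∈ M := by
  let π₁ : Equiv.Perm (Fin n) := Equiv.swap i a
  have hja : π₁ j ≠ a := by
    intro h
    have : π₁ j = π₁ i := by simpa [π₁] using h
    exact hij.symm (π₁.injective this)
  let π₂ : Equiv.Perm (Fin n) := Equiv.swap (π₁ j) b
  let π : Equiv.Perm (Fin n) := π₁.trans π₂
  have hπi : π i = a := by
    simp only [π, Equiv.trans_apply, π₁, Equiv.swap_apply_left]
    exact Equiv.swap_apply_of_ne_of_ne hja.symm hab
  have hπj : π j = b := by
    simp [π, π₂, Equiv.trans_apply]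
  have key : ((fun x => if x = a then b else x) : Fin n → Fin n) =
      ⇑π ∘ (fun x => if x = i then j else x) ∘ ⇑π.symm := by
    funext x
    simp only [Function.comp_apply]
    by_cases hx : x = a
    · have h1 : π.symm a = i := by rw [← hπi, Equiv.symm_apply_apply]
      simp [hx, h1, hπj]
    · have h1 : π.symm x ≠ i := by
        intro h
        exact hx (by rw [← hπi, ← h, Equiv.apply_symm_apply])
      simp [hx, h1]
  show ((fun x => if x = a then b else x) : Fin n → Fin n) ∈ M
  rw [key]
  exact M.mul_mem (hperm π) (M.mul_mem he (hperm π.symm))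

lemma all_mem {n : ℕ} (M : Submonoid (Function.End (Fin n)))
    (hperm : ∀ σ : Equiv.Perm (Fin n), (⇑σ : Function.End (Fin n)) ∈ M)
    (hcon : ∀ a b : Fin n, a ≠ b →
      ((fun x => if x = a then b else x) : Function.End (Fin n)) ∈ M)
    (f : Fin n → Fin n) : (f : Function.End (Fin n)) ∈ M := by
  suffices h : ∀ k (f : Fin n → Fin n),
      (Finset.univ \ Finset.image f Finset.univ).card = k → (f : Function.End (Fin n)) ∈ M by
    exact h _ f rfl
  intro k
  induction k using Nat.strong_induction_on with
  | _ k ih =>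
    intro f hk
    by_cases hsurj : Function.Surjective f
    · have hbij : Function.Bijective f := Finite.surjective_iff_bijective.mp hsurj
      have : f = ⇑(Equiv.ofBijective f hbij) := rfl
      rw [this]
      exact hperm _
    · have hninj : ¬ Function.Injective f := fun h =>
        hsurj (Finite.injective_iff_surjective.mp h)
      obtain ⟨c, hc⟩ : ∃ c, ∀ x, f x ≠ c := by
        simp only [Function.Surjective, not_forall] at hsurj
        obtain ⟨c, hc⟩ := hsurj
        exact ⟨c, fun x hx => hc ⟨x, hx⟩⟩
      have hcimg : c ∉ Finset.image f Finset.univ := by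
        simp only [Finset.mem_image, Finset.mem_univ, true_and, not_exists]
        exact hc
      obtain ⟨a, b, hfab, hab⟩ : ∃ a b, f a = f b ∧ a ≠ b := by
        simp only [Function.Injective, not_forall] at hninj
        obtain ⟨a, b, h1, h2⟩ := hninj
        exact ⟨a, b, h1, h2⟩
      set g : Fin n → Fin n := fun x => if x = a then c else f x with hg
      have hfg : f = g ∘ (fun x => if x = a then b else x) := by
        funext x
        simp only [Function.comp_apply]
        by_cases hx : x = a
        · simp [hg, hx, hab.symm, ← hfab]
        · simp [hg, hx]
      have himg : Finset.image g Finset.univ = insert c (Finset.image f Finset.univ) := by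
        ext y
        simp only [Finset.mem_image, Finset.mem_univ, true_and, Finset.mem_insert]
        constructor
        · rintro ⟨x, rfl⟩
          by_cases hx : x = a
          · left; simp [hg, hx]
          · right; exact ⟨x, by simp [hg, hx]⟩
        · rintro (rfl | ⟨x, rfl⟩)
          · exact ⟨a, by simp [hg]⟩
          · by_cases hx : x = a
            · exact ⟨b, by simp [hg, hab.symm, hx, ← hfab]⟩
            · exact ⟨x, by simp [hg, hx]⟩
      have hlt : (Finset.univ \ Finset.image g Finset.univ).card < k := by
        rw [himg, ← hk]
        apply Finset.card_lt_card
        constructor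
        · intro x hx
          simp only [Finset.mem_sdiff, Finset.mem_insert] at hx ⊢
          exact ⟨hx.1, fun h => hx.2 (Or.inr h)⟩
        · intro hsub
          have hmem : c ∈ Finset.univ \ Finset.image f Finset.univ := by
            simp [hcimg]
          have := hsub hmem
          simp at this
      show f ∈ M
      rw [hfg]
      exact M.mul_mem (ih _ hlt g rfl) (hcon a b hab)

theorem stmt10 (n : ℕ) (hn : 2 ≤ n) (i j : Fin n) (hij : i ≠ j) :
    Submonoid.closure
      ({ (Equiv.swap (⟨0, by omega⟩ : Fin n) (⟨1, by omega⟩ : Fin n) : Fin n → Fin n),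
         (fun k : Fin n => (⟨(k.val + 1) % n, Nat.mod_lt _ (by omega)⟩ : Fin n)),
         (fun x : Fin n => if x = i then j else x) } : Set (Function.End (Fin n))) = ⊤ := by
  obtain ⟨m, rfl⟩ : ∃ m, n = m + 2 := ⟨n - 2, by omega⟩
  set M := Submonoid.closure
      ({ (Equiv.swap (⟨0, by omega⟩ : Fin (m + 2)) (⟨1, by omega⟩ : Fin (m + 2)) : Fin (m + 2) → Fin (m + 2)),
         (fun k : Fin (m + 2) => (⟨(k.val + 1) % (m + 2), Nat.mod_lt _ (by omega)⟩ : Fin (m + 2))),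
         (fun x : Fin (m + 2) => if x = i then j else x) } : Set (Function.End (Fin (m + 2)))) with hM
  have hcycfun : (fun k : Fin (m + 2) => (⟨(k.val + 1) % (m + 2), Nat.mod_lt _ (by omega)⟩ : Fin (m + 2)))
      = ⇑(finRotate (m + 2)) := by
    funext k
    rw [finRotate_succ_apply]
    ext
    simp [Fin.add_def]
  have h2 : (⇑(finRotate (m + 2)) : Function.End (Fin (m + 2))) ∈ M := by
    rw [← hcycfun]
    exact Submonoid.subset_closure (Set.mem_insert_of_mem _ (Set.mem_insert _ _))
  have h1 : (⇑(Equiv.swap (0 : Fin (m + 2)) (finRotate (m + 2) 0)) : Function.End (Fin (m + 2))) ∈ M := by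
    have h0 : (⟨0, by omega⟩ : Fin (m + 2)) = 0 := by ext; simp
    have h1' : finRotate (m + 2) (0 : Fin (m + 2)) = (⟨1, by omega⟩ : Fin (m + 2)) := by
      rw [finRotate_succ_apply]
      ext
      simp [Fin.add_def]
    have heq : Equiv.swap (⟨0, by omega⟩ : Fin (m + 2)) (⟨1, by omega⟩ : Fin (m + 2))
        = Equiv.swap (0 : Fin (m + 2)) (finRotate (m + 2) 0) := by
      rw [h0, h1']
    rw [← heq]
    exact Submonoid.subset_closure (Set.mem_insert _ _)
  have hperm := perm_mem M h2 h1
  have he : ((fun x => if x = i then j else x) : Function.End (Fin (m + 2))) ∈ M :=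
    Submonoid.subset_closure (Set.mem_insert_of_mem _ (Set.mem_insert_of_mem _ (Set.mem_singleton _)))
  have hcon := con_mem M hperm i j hij he
  rw [eq_top_iff]
  intro f _
  exact all_mem M hperm hcon f
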